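/- Fix β real with 0 < |β| < 1, α = √(1−β²), x₁, x₂ ∈ ℝ with x₁ ≠ (π/α)(1/2+k) for every integer k. Let θ(x) = β(x+x₂) + iα x₁, K(x) = 4·arctan(e^{θ(x)}) and Kₜ(x) = 4iα e^{θ(x)}/(1+e^{2θ(x)}). Then: (1) for all x ∈ ℝ, sin(K(x)/2) = sech(θ(x)) and cos(K(x)/2) = −tanh(θ(x)); (2) for all x ∈ ℝ: K′(x) = [1/(β−iα) + (β−iα)]·sin(K(x)/2) = 2β·sin(K(x)/2) and Kₜ(x) = [1/(β−iα) − (β−iα)]·sin(K(x)/2) = 2iα·sin(K(x)/2); i.e. (K, Kₜ) is a Bäcklund transform of the zero solution (0,0) with parameter β − iα; (3) each of the four functions K′, i·Kₜ, sin(K/2), i·cos(K/2) has even real part and odd imaginary part about the axis x = −x₂: writing f for any of them, Re f(−x₂+y) = Re f(−x₂−y) and Im f(−x₂+y) = −Im f(−x₂−y) for all y ∈ ℝ. -/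

import Mathlib

open Complex

/-- **The complex-valued kink as a Bäcklund transform of zero (Lemma 3.5).**
For `0 < |β| < 1`, `α = √(1−β²)` and shifts `x₁, x₂` with `x₁` nondegenerate,
the complex kink `K(x) = 4 arctan(e^{θ(x)})`, `θ(x) = β(x+x₂)+iαx₁`, with
`Kₜ(x) = 4iα e^{θ}/(1+e^{2θ})`, satisfies `sin(K/2) = sech θ`, `cos(K/2) = −tanh θ`,
the Bäcklund equations with parameter `β − iα`, and the stated parity properties
about the axis `x = −x₂`. -/
theorem complex_kink_backlund_of_zero (β x₁ x₂ : ℝ) (hβ0 : 0 < |β|) (hβ1 : |β| < 1)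
    (α : ℝ) (hα : α = Real.sqrt (1 - β ^ 2))
    (hx₁ : ∀ k : ℤ, x₁ ≠ (Real.pi / α) * (1 / 2 + (k : ℝ)))
    (θ : ℝ → ℂ) (hθ : ∀ x : ℝ, θ x = (β : ℂ) * ((x : ℂ) + (x₂ : ℂ)) + Complex.I * (α : ℂ) * (x₁ : ℂ))
    (K Kt : ℝ → ℂ)
    (hK : ∀ x : ℝ, K x = 4 * Complex.arctan (Complex.exp (θ x)))
    (hKt : ∀ x : ℝ, Kt x = 4 * Complex.I * (α : ℂ) * Complex.exp (θ x)
        / (1 + Complex.exp (2 * θ x))) :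
    -- (1) trigonometric identities
    (∀ x : ℝ, Complex.sin (K x / 2) = (Complex.cosh (θ x))⁻¹) ∧
    (∀ x : ℝ, Complex.cos (K x / 2) = -Complex.tanh (θ x)) ∧
    -- (2) Bäcklund equations with parameter β − iα
    (∀ x : ℝ, deriv K x
      = (1 / ((β : ℂ) - Complex.I * (α : ℂ)) + ((β : ℂ) - Complex.I * (α : ℂ)))
          * Complex.sin (K x / 2)) ∧
    (∀ x : ℝ, deriv K x = 2 * (β : ℂ) * Complex.sin (K x / 2)) ∧
    (∀ x : ℝ, Kt x
      = (1 / ((β : ℂ) - Complex.I * (α : ℂ)) - ((β : ℂ) - Complex.I * (α : ℂ)))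
          * Complex.sin (K x / 2)) ∧
    (∀ x : ℝ, Kt x = 2 * Complex.I * (α : ℂ) * Complex.sin (K x / 2)) ∧
    -- (3) parity about x = −x₂: even real part, odd imaginary part
    (∀ y : ℝ, (deriv K (-x₂ + y)).re = (deriv K (-x₂ - y)).re
      ∧ (deriv K (-x₂ + y)).im = -(deriv K (-x₂ - y)).im) ∧
    (∀ y : ℝ, (Complex.I * Kt (-x₂ + y)).re = (Complex.I * Kt (-x₂ - y)).re
      ∧ (Complex.I * Kt (-x₂ + y)).im = -(Complex.I * Kt (-x₂ - y)).im) ∧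
    (∀ y : ℝ, (Complex.sin (K (-x₂ + y) / 2)).re = (Complex.sin (K (-x₂ - y) / 2)).re
      ∧ (Complex.sin (K (-x₂ + y) / 2)).im = -(Complex.sin (K (-x₂ - y) / 2)).im) ∧
    (∀ y : ℝ, (Complex.I * Complex.cos (K (-x₂ + y) / 2)).re
        = (Complex.I * Complex.cos (K (-x₂ - y) / 2)).re
      ∧ (Complex.I * Complex.cos (K (-x₂ + y) / 2)).im
        = -(Complex.I * Complex.cos (K (-x₂ - y) / 2)).im) := by
  have hb2 : β ^ 2 < 1 := by nlinarith [_root_.sq_abs β, abs_nonneg β]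
  have hα0 : 0 < α := by rw [hα]; exact Real.sqrt_pos.mpr (by linarith)
  have hα2 : α ^ 2 = 1 - β ^ 2 := by rw [hα]; exact Real.sq_sqrt (by linarith)
  have hcosα : Real.cos (α * x₁) ≠ 0 := by
    intro h
    obtain ⟨k, hk⟩ := Real.cos_eq_zero_iff.mp h
    apply hx₁ k
    field_simp
    linear_combination 2 * hk
  have hθre : ∀ x : ℝ, (θ x).re = β * (x + x₂) := by intro x; rw [hθ]; simp
  have hθim : ∀ x : ℝ, (θ x).im = α * x₁ := by intro x; rw [hθ]; simp
  have hwre : ∀ x : ℝ, (Complex.exp (θ x)).re ≠ 0 := by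
    intro x
    rw [Complex.exp_re, hθim]
    exact mul_ne_zero (Real.exp_ne_zero _) hcosα
  have hd1 : ∀ x : ℝ, (1 : ℂ) - Complex.exp (θ x) * Complex.I ≠ 0 := by
    intro x h
    apply hwre x
    have h2 : Complex.exp (θ x) = -Complex.I := by linear_combination Complex.I * h + Complex.exp (θ x) * Complex.I_sq
    rw [h2]; simp
  have hd2 : ∀ x : ℝ, (1 : ℂ) + Complex.exp (θ x) * Complex.I ≠ 0 := by
    intro x h
    apply hwre x
    have h2 : Complex.exp (θ x) = Complex.I := by linear_combination -Complex.I * h + Complex.exp (θ x) * Complex.I_sq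
    rw [h2]; simp
  have hch : ∀ x : ℝ, Complex.cosh (θ x) ≠ 0 := by
    intro x h
    have h' : Complex.exp (θ x) + Complex.exp (-θ x) = 0 := by
      rw [Complex.cosh, div_eq_zero_iff] at h
      rcases h with h | h
      · exact h
      · norm_num at h
    have hsq : Complex.exp (θ x) ^ 2 = -1 := by
      rw [Complex.exp_neg] at h'
      have h0 := Complex.exp_ne_zero (θ x)
      field_simp at h'
      linear_combination h'
    rw [Complex.ext_iff] at hsq
    simp only [pow_two, Complex.mul_re, Complex.mul_im, Complex.neg_re, Complex.one_re,
      Complex.neg_im, Complex.one_im] at hsq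
    obtain ⟨h1, h2⟩ := hsq
    have hu := hwre x
    have hv : (Complex.exp (θ x)).im = 0 := by
      rcases mul_eq_zero.mp (show (Complex.exp (θ x)).re * (Complex.exp (θ x)).im = 0 by linarith) with h3 | h3
      · exact absurd h3 hu
      · exact h3
    rw [hv] at h1
    nlinarith [mul_self_nonneg ((Complex.exp (θ x)).re)]
  -- basic exp identities
  have hE0 : ∀ x : ℝ, (1 + Complex.exp (θ x) * Complex.I) / (1 - Complex.exp (θ x) * Complex.I) ≠ 0 :=
    fun x => div_ne_zero (hd2 x) (hd1 x)
  have hsum : ∀ x : ℝ, 1 + Complex.exp (θ x) ^ 2 = 2 * Complex.exp (θ x) * Complex.cosh (θ x) := by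
    intro x
    rw [Complex.cosh, Complex.exp_neg]
    field_simp [Complex.exp_ne_zero (θ x)]
    ring
  have hdiff : ∀ x : ℝ, Complex.exp (θ x) ^ 2 - 1 = 2 * Complex.exp (θ x) * Complex.sinh (θ x) := by
    intro x
    rw [Complex.sinh, Complex.exp_neg]
    field_simp [Complex.exp_ne_zero (θ x)]
  have hexp2 : ∀ x : ℝ, Complex.exp (2 * θ x) = Complex.exp (θ x) ^ 2 := by
    intro x; rw [two_mul, Complex.exp_add, sq]
  have hKarc : ∀ x : ℝ, (4 : ℂ) * Complex.arctan (Complex.exp (θ x)) / 2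
      = -Complex.I * Complex.log ((1 + Complex.exp (θ x) * Complex.I) / (1 - Complex.exp (θ x) * Complex.I)) := by
    intro x; rw [Complex.arctan]; ring
  have hsin : ∀ x : ℝ, Complex.sin ((4 : ℂ) * Complex.arctan (Complex.exp (θ x)) / 2)
      = (Complex.cosh (θ x))⁻¹ := by
    intro x
    set L := Complex.log ((1 + Complex.exp (θ x) * Complex.I) / (1 - Complex.exp (θ x) * Complex.I)) with hL
    have e1 : -(-Complex.I * L) * Complex.I = -L := by
      linear_combination L * Complex.I_sq
    have e2 : (-Complex.I * L) * Complex.I = L := by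
      linear_combination -L * Complex.I_sq
    rw [hKarc x, Complex.sin, e1, e2, Complex.exp_neg, hL, Complex.exp_log (hE0 x)]
    have h2w := hsum x
    field_simp [hd1 x, hd2 x, hch x]
    ring_nf
    linear_combination (-2 * (1 + Complex.exp (θ x)) + 2 * Complex.exp (θ x)) * h2w
      + (2 * Complex.exp (θ x) ^ 2 - 4 * Complex.exp (θ x) * Complex.cosh (θ x)) * Complex.I_sq
  have hcos : ∀ x : ℝ, Complex.cos ((4 : ℂ) * Complex.arctan (Complex.exp (θ x)) / 2)
      = -Complex.tanh (θ x) := by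
    intro x
    set L := Complex.log ((1 + Complex.exp (θ x) * Complex.I) / (1 - Complex.exp (θ x) * Complex.I)) with hL
    have e1 : -(-Complex.I * L) * Complex.I = -L := by
      linear_combination L * Complex.I_sq
    have e2 : (-Complex.I * L) * Complex.I = L := by
      linear_combination -L * Complex.I_sq
    rw [hKarc x, Complex.cos, e1, e2, Complex.exp_neg, hL, Complex.exp_log (hE0 x),
      Complex.tanh_eq_sinh_div_cosh]
    have h2w := hsum x
    have h3w := hdiff x
    field_simp [hd1 x, hd2 x, hch x]
    ring_nf
    linear_combination (2 * Complex.exp (θ x) ^ 2 * Complex.cosh (θ x) - 2 * Complex.exp (θ x) ^ 2 * Complex.sinh (θ x)) * Complex.I_sq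
      - 2 * Complex.cosh (θ x) * h3w + 2 * Complex.sinh (θ x) * h2w
  have h1w : ∀ x : ℝ, 1 + Complex.exp (2 * θ x) ≠ 0 := by
    intro x
    rw [hexp2 x, hsum x]
    exact mul_ne_zero (mul_ne_zero two_ne_zero (Complex.exp_ne_zero _)) (hch x)
  have hKtval : ∀ x : ℝ, 4 * Complex.I * (α : ℂ) * Complex.exp (θ x) / (1 + Complex.exp (2 * θ x))
      = 2 * Complex.I * (α : ℂ) * (Complex.cosh (θ x))⁻¹ := by
    intro x
    have h2w := hsum x
    rw [hexp2 x]
    have hne : (1 : ℂ) + Complex.exp (θ x) ^ 2 ≠ 0 := by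
      rw [hsum x]; exact mul_ne_zero (mul_ne_zero two_ne_zero (Complex.exp_ne_zero _)) (hch x)
    field_simp [hch x]
    linear_combination (-2 * (α : ℂ)) * h2w
  have hba : ((β : ℂ) - Complex.I * (α : ℂ)) * ((β : ℂ) + Complex.I * (α : ℂ)) = 1 := by
    have hc : (β : ℂ) ^ 2 + (α : ℂ) ^ 2 = 1 := by
      have : β ^ 2 + α ^ 2 = 1 := by rw [hα2]; ring
      exact_mod_cast this
    linear_combination hc - (α : ℂ) ^ 2 * Complex.I_sq
  have hbane : (β : ℂ) - Complex.I * (α : ℂ) ≠ 0 := by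
    intro h
    rw [h, zero_mul] at hba
    exact zero_ne_one hba
  have hc1 : 1 / ((β : ℂ) - Complex.I * (α : ℂ)) + ((β : ℂ) - Complex.I * (α : ℂ)) = 2 * (β : ℂ) := by
    field_simp
    linear_combination -hba
  have hc2 : 1 / ((β : ℂ) - Complex.I * (α : ℂ)) - ((β : ℂ) - Complex.I * (α : ℂ)) = 2 * Complex.I * (α : ℂ) := by
    field_simp
    linear_combination -hba
  have himE : ∀ x : ℝ, ((1 + Complex.exp (θ x) * Complex.I) / (1 - Complex.exp (θ x) * Complex.I)).im
      = 2 * (Complex.exp (θ x)).re / Complex.normSq (1 - Complex.exp (θ x) * Complex.I) := by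
    intro x
    rw [Complex.div_im]
    simp only [Complex.add_im, Complex.add_re, Complex.sub_im, Complex.sub_re, Complex.mul_im,
      Complex.mul_re, Complex.I_re, Complex.I_im, Complex.one_re, Complex.one_im]
    ring
  have hslit : ∀ x : ℝ, (1 + Complex.exp (θ x) * Complex.I) / (1 - Complex.exp (θ x) * Complex.I)
      ∈ Complex.slitPlane := by
    intro x
    refine Or.inr ?_
    rw [himE x]
    have hnsq : 0 < Complex.normSq (1 - Complex.exp (θ x) * Complex.I) :=
      Complex.normSq_pos.mpr (hd1 x)
    exact div_ne_zero (by simpa using hwre x) hnsq.ne'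
  have hKderiv : ∀ x : ℝ, HasDerivAt (fun y : ℝ => 4 * Complex.arctan (Complex.exp (θ y)))
      (2 * (β : ℂ) * (Complex.cosh (θ x))⁻¹) x := by
    intro x
    have hθc : HasDerivAt (fun z : ℂ => (β : ℂ) * (z + (x₂ : ℂ)) + Complex.I * (α : ℂ) * (x₁ : ℂ))
        ((β : ℂ)) (x : ℂ) := by
      simpa using (((hasDerivAt_id ((x : ℝ) : ℂ)).add_const ((x₂ : ℝ) : ℂ)).const_mul
        ((β : ℝ) : ℂ)).add_const (Complex.I * (α : ℂ) * (x₁ : ℂ))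
    have hgc : HasDerivAt (fun z : ℂ => Complex.exp ((β : ℂ) * (z + (x₂ : ℂ)) + Complex.I * (α : ℂ) * (x₁ : ℂ)))
        (Complex.exp (θ x) * (β : ℂ)) (x : ℂ) := by
      have h := (Complex.hasDerivAt_exp ((β : ℂ) * (((x : ℝ) : ℂ) + (x₂ : ℂ)) + Complex.I * (α : ℂ) * (x₁ : ℂ))).comp
        ((x : ℝ) : ℂ) hθc
      simpa [Function.comp_def, ← hθ x] using h
    have hnum : HasDerivAt (fun z : ℂ => 1 + Complex.exp ((β : ℂ) * (z + (x₂ : ℂ)) + Complex.I * (α : ℂ) * (x₁ : ℂ)) * Complex.I)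
        (Complex.exp (θ x) * (β : ℂ) * Complex.I) (x : ℂ) := (hgc.mul_const Complex.I).const_add 1
    have hden : HasDerivAt (fun z : ℂ => 1 - Complex.exp ((β : ℂ) * (z + (x₂ : ℂ)) + Complex.I * (α : ℂ) * (x₁ : ℂ)) * Complex.I)
        (-(Complex.exp (θ x) * (β : ℂ) * Complex.I)) (x : ℂ) := (hgc.mul_const Complex.I).const_sub 1
    have hdne : (1 : ℂ) - Complex.exp ((β : ℂ) * (((x : ℝ) : ℂ) + (x₂ : ℂ)) + Complex.I * (α : ℂ) * (x₁ : ℂ)) * Complex.I ≠ 0 := by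
      rw [← hθ x]; exact hd1 x
    have hE := hnum.div hden hdne
    have hsl : (1 + Complex.exp ((β : ℂ) * (((x : ℝ) : ℂ) + (x₂ : ℂ)) + Complex.I * (α : ℂ) * (x₁ : ℂ)) * Complex.I)
        / (1 - Complex.exp ((β : ℂ) * (((x : ℝ) : ℂ) + (x₂ : ℂ)) + Complex.I * (α : ℂ) * (x₁ : ℂ)) * Complex.I)
        ∈ Complex.slitPlane := by
      rw [← hθ x]; exact hslit x
    have hlog := (Complex.hasDerivAt_log hsl).comp ((x : ℝ) : ℂ) hE
    have hF := hlog.const_mul ((-2 : ℂ) * Complex.I)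
    have hFr := hF.comp_ofReal
    have heq : (fun y : ℝ => (-2 : ℂ) * Complex.I *
        (Complex.log ∘ fun z : ℂ => (1 + Complex.exp ((β : ℂ) * (z + (x₂ : ℂ)) + Complex.I * (α : ℂ) * (x₁ : ℂ)) * Complex.I)
          / (1 - Complex.exp ((β : ℂ) * (z + (x₂ : ℂ)) + Complex.I * (α : ℂ) * (x₁ : ℂ)) * Complex.I)) ↑y)
        = fun y : ℝ => 4 * Complex.arctan (Complex.exp (θ y)) := by
      funext y
      simp only [Function.comp, ← hθ y, Complex.arctan]
      ring
    simp only [Pi.div_def] at hFr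
    rw [heq] at hFr
    convert hFr using 1
    rw [← hθ x]
    have h2w := hsum x
    have hI := Complex.I_sq
    have key : (1 - Complex.exp (θ x) * Complex.I) * (1 + Complex.exp (θ x) * Complex.I)
        = 2 * Complex.exp (θ x) * Complex.cosh (θ x) := by
      linear_combination (-(Complex.exp (θ x) ^ 2)) * hI + h2w
    symm
    rw [inv_div, div_mul_div_comm, mul_div_assoc']
    rw [div_eq_iff (mul_ne_zero (hd2 x) (pow_ne_zero 2 (hd1 x))), eq_comm]
    field_simp [hch x]
    linear_combination (β : ℂ) * key + 2 * (β : ℂ) * Complex.cosh (θ x) * Complex.exp (θ x) * hI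
      + (-(β : ℂ) * Complex.exp (θ x) * Complex.I) * h2w
      + (-2 * (β : ℂ) * Complex.exp (θ x) ^ 2 * Complex.cosh (θ x) * Complex.I
        + (β : ℂ) * Complex.exp (θ x) ^ 3 * Complex.I) * hI
  have hθpar : ∀ y : ℝ, θ (-x₂ - y) = -((starRingEnd ℂ) (θ (-x₂ + y))) := by
    intro y
    rw [hθ, hθ]
    simp only [map_add, map_mul, Complex.conj_I, Complex.conj_ofReal]
    push_cast
    ring
  have hCpar : ∀ y : ℝ, Complex.cosh (θ (-x₂ - y)) = (starRingEnd ℂ) (Complex.cosh (θ (-x₂ + y))) := by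
    intro y; rw [hθpar y, Complex.cosh_neg, Complex.cosh_conj]
  have hTpar : ∀ y : ℝ, Complex.tanh (θ (-x₂ - y)) = -((starRingEnd ℂ) (Complex.tanh (θ (-x₂ + y)))) := by
    intro y
    rw [Complex.tanh_eq_sinh_div_cosh, Complex.tanh_eq_sinh_div_cosh, hθpar y, Complex.sinh_neg,
      Complex.cosh_neg, Complex.sinh_conj, Complex.cosh_conj, map_div₀]
    ring
  have hKfun : K = fun y : ℝ => 4 * Complex.arctan (Complex.exp (θ y)) := funext hK
  have hsinK : ∀ x : ℝ, Complex.sin (K x / 2) = (Complex.cosh (θ x))⁻¹ := fun x => by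
    rw [hK x]; exact hsin x
  have hcosK : ∀ x : ℝ, Complex.cos (K x / 2) = -Complex.tanh (θ x) := fun x => by
    rw [hK x]; exact hcos x
  have hdK : ∀ x : ℝ, deriv K x = 2 * (β : ℂ) * (Complex.cosh (θ x))⁻¹ := fun x => by
    rw [hKfun]; exact (hKderiv x).deriv
  have hKt2 : ∀ x : ℝ, Kt x = 2 * Complex.I * (α : ℂ) * (Complex.cosh (θ x))⁻¹ := fun x => by
    rw [hKt x]; exact hKtval x
  refine ⟨hsinK, hcosK, ?_, ?_, ?_, ?_, ?_, ?_, ?_, ?_⟩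
  · intro x; rw [hdK x, hsinK x, hc1]
  · intro x; rw [hdK x, hsinK x]
  · intro x; rw [hKt2 x, hsinK x, hc2]
  · intro x; rw [hKt2 x, hsinK x]
  · intro y
    have h : deriv K (-x₂ - y) = (starRingEnd ℂ) (deriv K (-x₂ + y)) := by
      rw [hdK, hdK, hCpar y]
      simp only [map_mul, map_inv₀, Complex.conj_ofReal, map_ofNat]
    exact ⟨by rw [h]; simp, by rw [h]; simp⟩
  · intro y
    have h : Complex.I * Kt (-x₂ - y) = (starRingEnd ℂ) (Complex.I * Kt (-x₂ + y)) := by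
      rw [hKt2, hKt2, hCpar y]
      simp only [map_mul, map_inv₀, Complex.conj_ofReal, Complex.conj_I, map_ofNat]
      ring
    exact ⟨by rw [h]; simp, by rw [h]; simp⟩
  · intro y
    have h : Complex.sin (K (-x₂ - y) / 2) = (starRingEnd ℂ) (Complex.sin (K (-x₂ + y) / 2)) := by
      rw [hsinK, hsinK, hCpar y, map_inv₀]
    exact ⟨by rw [h]; simp, by rw [h]; simp⟩
  · intro y
    have h : Complex.I * Complex.cos (K (-x₂ - y) / 2)
        = (starRingEnd ℂ) (Complex.I * Complex.cos (K (-x₂ + y) / 2)) := by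
      rw [hcosK, hcosK, hTpar y]
      simp only [map_mul, map_neg, Complex.conj_I]
      ring
    exact ⟨by rw [h]; simp, by rw [h]; simp⟩
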